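/- Let μ = N_d(0, Σ) be a centered Gaussian measure on ℝᵈ with positive definite covariance Σ, and let θ ∈ ℝᵈ and r > 0. Then μ(B(θ, r)) ≥ exp(−θᵀΣ^{−1}θ/2) · μ(B(0, r)), where B(x,r) is the closed Euclidean ball of radius r around x. -/

import Mathlib

open MeasureTheory Matrix

open ENNReal

/-- Shifted-ball lower bound for a centered Gaussian measure `N_d(0, Σ)` (given by
its density `∝ exp(-xᵀΣ⁻¹x/2)` w.r.t. Lebesgue measure on Euclidean space):
`μ(B(θ,r)) ≥ exp(-θᵀΣ⁻¹θ/2) · μ(B(0,r))`. -/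

theorem stmt_16 (d : ℕ) (S : Matrix (Fin d) (Fin d) ℝ) (hS : S.PosDef)
    (θ : EuclideanSpace ℝ (Fin d)) (r : ℝ) (hr : 0 < r) :
    let Q : EuclideanSpace ℝ (Fin d) → ℝ := fun x => ∑ i, ∑ j, x i * S⁻¹ i j * x j
    let μ : Measure (EuclideanSpace ℝ (Fin d)) :=
      volume.withDensity fun x => ENNReal.ofReal (Real.exp (-(Q x) / 2))
    ENNReal.ofReal (Real.exp (-(Q θ) / 2)) * μ (Metric.closedBall 0 r)
      ≤ μ (Metric.closedBall θ r) := by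
  intro Q μ
  set f : EuclideanSpace ℝ (Fin d) → ℝ≥0∞ :=
    fun x => ENNReal.ofReal (Real.exp (-(Q x) / 2)) with hf
  have hQm : Measurable Q := by
    apply Finset.measurable_sum
    intro i _
    apply Finset.measurable_sum
    intro j _
    exact (((EuclideanSpace.proj i).continuous.measurable).mul_const _).mul
        (EuclideanSpace.proj j).continuous.measurable
  have hfm : Measurable f := by
    apply ENNReal.measurable_ofReal.comp
    exact Real.measurable_exp.comp ((hQm.neg).div_const 2)
  -- parallelogram-type identity
  have key : ∀ x : EuclideanSpace ℝ (Fin d),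
      Q (x + θ) + Q (θ - x) = 2 * Q x + 2 * Q θ := by
    intro x
    have hQ : ∀ y : EuclideanSpace ℝ (Fin d), Q y = ∑ i, ∑ j, y i * S⁻¹ i j * y j :=
      fun y => rfl
    rw [hQ, hQ, hQ, hQ]
    simp only [Finset.mul_sum, ← Finset.sum_add_distrib]
    refine Finset.sum_congr rfl fun i _ => ?_
    refine Finset.sum_congr rfl fun j _ => ?_
    simp only [PiLp.add_apply, PiLp.sub_apply]
    ring
  -- pointwise AM-GM inequality
  have amgm : ∀ u v : ℝ, 2 * Real.exp ((u + v) / 2) ≤ Real.exp u + Real.exp v := by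
    intro u v
    have h := sq_nonneg (Real.exp (u / 2) - Real.exp (v / 2))
    have e1 : Real.exp (u / 2) * Real.exp (u / 2) = Real.exp u := by
      rw [← Real.exp_add]; ring_nf
    have e2 : Real.exp (v / 2) * Real.exp (v / 2) = Real.exp v := by
      rw [← Real.exp_add]; ring_nf
    have e3 : Real.exp (u / 2) * Real.exp (v / 2) = Real.exp ((u + v) / 2) := by
      rw [← Real.exp_add]; ring_nf
    nlinarith
  have pointwise : ∀ x : EuclideanSpace ℝ (Fin d),
      2 * (ENNReal.ofReal (Real.exp (-(Q θ) / 2)) * f x) ≤ f (x + θ) + f (θ - x) := by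
    intro x
    have hreal : 2 * (Real.exp (-(Q θ) / 2) * Real.exp (-(Q x) / 2))
        ≤ Real.exp (-(Q (x + θ)) / 2) + Real.exp (-(Q (θ - x)) / 2) := by
      have h := amgm (-(Q (x + θ)) / 2) (-(Q (θ - x)) / 2)
      have : (-(Q (x + θ)) / 2 + -(Q (θ - x)) / 2) / 2 = -(Q θ) / 2 + -(Q x) / 2 := by
        have := key x; linarith
      rw [this, Real.exp_add] at h
      linarith
    calc 2 * (ENNReal.ofReal (Real.exp (-(Q θ) / 2)) * f x)
        = ENNReal.ofReal (2 * (Real.exp (-(Q θ) / 2) * Real.exp (-(Q x) / 2))) := by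
          rw [ENNReal.ofReal_mul (by norm_num : (0:ℝ) ≤ 2),
            ENNReal.ofReal_mul (Real.exp_nonneg _), ENNReal.ofReal_ofNat]
      _ ≤ ENNReal.ofReal (Real.exp (-(Q (x + θ)) / 2) + Real.exp (-(Q (θ - x)) / 2)) :=
          ENNReal.ofReal_le_ofReal hreal
      _ = f (x + θ) + f (θ - x) := ENNReal.ofReal_add (Real.exp_nonneg _) (Real.exp_nonneg _)
  -- translation
  have hμ : ∀ s : Set (EuclideanSpace ℝ (Fin d)), MeasurableSet s →
      μ s = ∫⁻ x in s, f x := fun s hs => withDensity_apply _ hs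
  have hB0 : MeasurableSet (Metric.closedBall (0 : EuclideanSpace ℝ (Fin d)) r) :=
    Metric.isClosed_closedBall.measurableSet
  have hBθ : MeasurableSet (Metric.closedBall θ r) := Metric.isClosed_closedBall.measurableSet
  have htrans : ∫⁻ x in Metric.closedBall (0 : EuclideanSpace ℝ (Fin d)) r, f (x + θ)
      = μ (Metric.closedBall θ r) := by
    rw [hμ _ hBθ]
    have hpre : (· + θ) ⁻¹' Metric.closedBall θ r
        = Metric.closedBall (0 : EuclideanSpace ℝ (Fin d)) r := by
      ext x
      simp [Metric.mem_closedBall, dist_eq_norm]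
    rw [← hpre]
    exact (measurePreserving_add_right volume θ).setLIntegral_comp_preimage_emb
      (MeasurableEquiv.addRight θ).measurableEmbedding f _
  have hneg : ∫⁻ x in Metric.closedBall (0 : EuclideanSpace ℝ (Fin d)) r, f (θ - x)
      = ∫⁻ x in Metric.closedBall (0 : EuclideanSpace ℝ (Fin d)) r, f (x + θ) := by
    have hpre : (Neg.neg : EuclideanSpace ℝ (Fin d) → _) ⁻¹' Metric.closedBall 0 r
        = Metric.closedBall 0 r := by
      ext x
      simp [Metric.mem_closedBall, dist_eq_norm]
    calc ∫⁻ x in Metric.closedBall (0 : EuclideanSpace ℝ (Fin d)) r, f (θ - x)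
        = ∫⁻ x in (Neg.neg : EuclideanSpace ℝ (Fin d) → _) ⁻¹' Metric.closedBall 0 r,
            (fun y => f (y + θ)) (-x) := by
          rw [hpre]
          refine setLIntegral_congr_fun hB0 (fun x _ => ?_)
          simp [sub_eq_neg_add]
      _ = ∫⁻ x in Metric.closedBall (0 : EuclideanSpace ℝ (Fin d)) r, f (x + θ) :=
          (Measure.measurePreserving_neg volume).setLIntegral_comp_preimage_emb
            (MeasurableEquiv.neg (EuclideanSpace ℝ (Fin d))).measurableEmbedding
            (fun y => f (y + θ)) (Metric.closedBall 0 r)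
  have hsum : 2 * (ENNReal.ofReal (Real.exp (-(Q θ) / 2)) * μ (Metric.closedBall 0 r))
      ≤ 2 * μ (Metric.closedBall θ r) := by
    calc 2 * (ENNReal.ofReal (Real.exp (-(Q θ) / 2)) * μ (Metric.closedBall 0 r))
        = ∫⁻ x in Metric.closedBall (0 : EuclideanSpace ℝ (Fin d)) r,
            2 * (ENNReal.ofReal (Real.exp (-(Q θ) / 2)) * f x) := by
          rw [hμ _ hB0, lintegral_const_mul 2 (hfm.const_mul _),
            lintegral_const_mul _ hfm]
      _ ≤ ∫⁻ x in Metric.closedBall (0 : EuclideanSpace ℝ (Fin d)) r,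
            (f (x + θ) + f (θ - x)) := lintegral_mono fun x => pointwise x
      _ = (∫⁻ x in Metric.closedBall (0 : EuclideanSpace ℝ (Fin d)) r, f (x + θ))
          + ∫⁻ x in Metric.closedBall (0 : EuclideanSpace ℝ (Fin d)) r, f (θ - x) := by
          rw [lintegral_add_left]
          exact hfm.comp (measurable_id.add_const θ)
      _ = 2 * μ (Metric.closedBall θ r) := by
          rw [hneg, htrans]; ring
  exact (ENNReal.mul_le_mul_iff_right (by norm_num) (by norm_num)).mp hsum
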